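/- Let f(w) = −log( (1/K) Σ_{i=1}^K exp(μᵢᵀ w − ‖μᵢ‖²/2) ) with ‖μᵢ‖ ≤ R for all i. Then 0 ⪯ −∇²f(w) ⪯ H^{1/2} where H^{1/2} := Σ_{1≤i≤j≤K} (μᵢ − μⱼ)(μᵢ − μⱼ)ᵀ, and Tr((H^{1/2})²) ≤ Tr(H^{1/2})² ≤ 16 K⁴ R⁴. -/

import Mathlib

open scoped Matrix

noncomputable section
variable {d K : ℕ}

abbrev E (d : ℕ) := EuclideanSpace ℝ (Fin d)

def ee (μ : Fin K → E d) (i : Fin K) (w : E d) : ℝ :=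
  Real.exp (inner (𝕜 := ℝ) (μ i) w - ‖μ i‖ ^ 2 / 2)

def Sf (μ : Fin K → E d) (w : E d) : ℝ := ∑ i, ee μ i w

lemma ee_pos (μ : Fin K → E d) (i : Fin K) (w : E d) : 0 < ee μ i w := Real.exp_pos _

lemma Sf_pos (hK : 0 < K) (μ : Fin K → E d) (w : E d) : 0 < Sf μ w :=
  Finset.sum_pos (fun i _ => ee_pos μ i w) (by simp [Finset.univ_nonempty_iff, ← Fin.pos_iff_nonempty, hK])

lemma hasS (μ : Fin K → E d) (w : E d) :
    HasFDerivAt (Sf μ) (∑ i, ee μ i w • innerSL ℝ (μ i)) w :=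
  HasFDerivAt.fun_sum fun i _ => ((innerSL ℝ (μ i)).hasFDerivAt.sub_const _).exp

def Gf (μ : Fin K → E d) (w : E d) : E d := (-(Sf μ w)⁻¹) • ∑ i, ee μ i w • μ i

lemma hasf (hK : 0 < K) (μ : Fin K → E d)
    (f : E d → ℝ)
    (hf : ∀ w, f w = -Real.log ((1 / (K : ℝ)) * ∑ i, Real.exp (inner (𝕜 := ℝ) (μ i) w - ‖μ i‖ ^ 2 / 2))) (w : E d) :
    HasGradientAt f (Gf μ w) w := by
  have hfe : f = fun w => -Real.log ((1 / (K : ℝ)) * Sf μ w) := funext hf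
  rw [hasGradientAt_iff_hasFDerivAt, hfe]
  have hc : (0:ℝ) < 1 / (K:ℝ) := by positivity
  have hpos := Sf_pos hK μ w
  have hne : (1 / (K:ℝ)) * Sf μ w ≠ 0 := by positivity
  have h1 : HasFDerivAt (fun w => (1 / (K : ℝ)) * Sf μ w)
      ((1 / (K : ℝ)) • (∑ i, ee μ i w • innerSL ℝ (μ i))) w := (hasS μ w).const_mul _
  have h2 := (h1.log hne).neg
  refine h2.congr_fderiv (Eq.symm ?_)
  ext v
  simp only [ContinuousLinearMap.neg_apply, ContinuousLinearMap.smul_apply,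
    ContinuousLinearMap.sum_apply, innerSL_apply_apply, InnerProductSpace.toDual_apply_apply, Gf,
    real_inner_smul_left, sum_inner, smul_eq_mul]
  rw [Finset.mul_sum]
  field_simp
  rw [Finset.sum_neg_distrib, ← Finset.sum_div, mul_neg, mul_div_assoc', mul_div_cancel_left₀ _ hpos.ne']

def Tf (μ : Fin K → E d) (w : E d) : E d := ∑ i, ee μ i w • μ i

lemma sum_apply_piLp (F : Fin K → E d) (k : Fin d) : (∑ i, F i) k = ∑ i, F i k := by
  exact map_sum (PiLp.proj (𝕜 := ℝ) (p := 2) (β := fun _ : Fin d => ℝ) k) F Finset.univ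

lemma Gf_eq (μ : Fin K → E d) : Gf μ = fun w => (-(Sf μ w)⁻¹) • Tf μ w := rfl

def DG (μ : Fin K → E d) (w : E d) : E d →L[ℝ] E d :=
  (-(Sf μ w)⁻¹) • (∑ i, (ee μ i w • innerSL ℝ (μ i)).smulRight (μ i)) +
    (((Sf μ w)^2)⁻¹ • ∑ i, ee μ i w • innerSL ℝ (μ i)).smulRight (Tf μ w)

lemma hasG (hK : 0 < K) (μ : Fin K → E d) (w : E d) :
    HasFDerivAt (Gf μ) (DG μ w) w := by
  have hT : HasFDerivAt (Tf μ) (∑ i, (ee μ i w • innerSL ℝ (μ i)).smulRight (μ i)) w :=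
    HasFDerivAt.fun_sum fun i _ =>
      (((innerSL ℝ (μ i)).hasFDerivAt.sub_const _).exp).smul_const (μ i)
  have hs : HasFDerivAt (fun w => -(Sf μ w)⁻¹)
      (((Sf μ w)^2)⁻¹ • ∑ i, ee μ i w • innerSL ℝ (μ i)) w := by
    have h := (HasDerivAt.comp_hasFDerivAt w
      ((hasDerivAt_inv (Sf_pos hK μ w).ne').neg) (hasS μ w))
    exact h.congr_fderiv (by simp [neg_neg])
  rw [Gf_eq]
  exact hs.smul hT

def Mex (μ : Fin K → E d) (w : E d) : Matrix (Fin d) (Fin d) ℝ :=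
  Matrix.of fun k l => ((Sf μ w)^2)⁻¹ * ((∑ i, ee μ i w * μ i k) * (∑ i, ee μ i w * μ i l))
    - (Sf μ w)⁻¹ * ∑ i, ee μ i w * (μ i k * μ i l)

lemma toCLM_Mex (μ : Fin K → E d) (w : E d) :
    Matrix.toEuclideanCLM (𝕜 := ℝ) (Mex μ w) = DG μ w := by
  ext x k
  have happ : ∀ (A : Matrix (Fin d) (Fin d) ℝ) (x : E d) (k : Fin d),
      (Matrix.toEuclideanCLM (𝕜 := ℝ) A x) k = ∑ l, A k l * x l := by
    intro A x k
    show (WithLp.ofLp (Matrix.toEuclideanCLM (𝕜 := ℝ) A x)) k = _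
    rw [Matrix.ofLp_toEuclideanCLM]
    simp [Matrix.toLin'_apply, Matrix.mulVec, dotProduct]
  rw [happ]
  simp only [DG, Mex, Matrix.of_apply, ContinuousLinearMap.add_apply,
    ContinuousLinearMap.smul_apply, ContinuousLinearMap.sum_apply,
    ContinuousLinearMap.smulRight_apply, innerSL_apply_apply, PiLp.add_apply, PiLp.smul_apply,
    smul_eq_mul, Tf, Finset.sum_apply, PiLp.inner_apply, RCLike.inner_apply, conj_trivial,
    sub_mul, Finset.sum_sub_distrib, sum_apply_piLp]
  have gen : ∀ a : Fin K → ℝ, ∑ l, (∑ i, a i * μ i l) * x l = ∑ i, a i * ∑ l, μ i l * x l := by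
    intro a
    simp only [Finset.sum_mul, Finset.mul_sum]
    rw [Finset.sum_comm]
    exact Finset.sum_congr rfl fun i _ => Finset.sum_congr rfl fun l _ => by ring
  have t1 : ∑ l, (Sf μ w ^ 2)⁻¹ * ((∑ i, ee μ i w * μ i k) * ∑ i, ee μ i w * μ i l) * x l
      = ((Sf μ w ^ 2)⁻¹ * (∑ i, ee μ i w * μ i k)) * ∑ i, ee μ i w * ∑ l, μ i l * x l := by
    rw [← gen (fun i => ee μ i w), Finset.mul_sum]
    exact Finset.sum_congr rfl fun l _ => by ring
  have t2 : ∑ l, ((Sf μ w)⁻¹ * ∑ i, ee μ i w * (μ i k * μ i l)) * x l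
      = (Sf μ w)⁻¹ * ∑ i, (ee μ i w * μ i k) * ∑ l, μ i l * x l := by
    rw [← gen (fun i => ee μ i w * μ i k), Finset.mul_sum]
    refine Finset.sum_congr rfl fun l _ => ?_
    rw [show ∑ i, ee μ i w * (μ i k * μ i l) = ∑ i, ee μ i w * μ i k * μ i l from
      Finset.sum_congr rfl fun i _ => by ring]
    ring
  rw [t1, t2]
  rw [show ∑ i, (ee μ i w * μ i k) * ∑ l, μ i l * x l
      = ∑ i, (ee μ i w * ∑ l, μ i l * x l) * μ i k from
    Finset.sum_congr rfl fun i _ => by ring]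
  simp only [show ∀ i, ∑ l, x.ofLp l * (μ i).ofLp l = ∑ l, (μ i).ofLp l * x.ofLp l from
    fun i => Finset.sum_congr rfl fun l _ => mul_comm _ _]
  ring


lemma gen_sum (μ : Fin K → E d) (x : Fin d → ℝ) (a : Fin K → ℝ) :
    ∑ l, (∑ i, a i * μ i l) * x l = ∑ i, a i * ∑ l, μ i l * x l := by
  simp only [Finset.sum_mul, Finset.mul_sum]
  rw [Finset.sum_comm]
  exact Finset.sum_congr rfl fun i _ => Finset.sum_congr rfl fun l _ => by ring

lemma quad_Mex (μ : Fin K → E d) (w : E d) (x : Fin d → ℝ) :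
    x ⬝ᵥ ((Mex μ w) *ᵥ x) = ((Sf μ w)^2)⁻¹ * (∑ i, ee μ i w * (∑ l, μ i l * x l))^2
      - (Sf μ w)⁻¹ * ∑ i, ee μ i w * (∑ l, μ i l * x l)^2 := by
  have inner_eq : ∀ k, (Mex μ w *ᵥ x) k
      = (Sf μ w ^ 2)⁻¹ * (∑ i, ee μ i w * μ i k) * (∑ i, ee μ i w * ∑ l, μ i l * x l)
        - (Sf μ w)⁻¹ * ∑ i, (ee μ i w * μ i k) * ∑ l, μ i l * x l := by
    intro k
    simp only [Matrix.mulVec, dotProduct, Mex, Matrix.of_apply, sub_mul,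
      Finset.sum_sub_distrib]
    congr 1
    · rw [← gen_sum μ x (fun i => ee μ i w), Finset.mul_sum]
      exact Finset.sum_congr rfl fun l _ => by ring
    · rw [← gen_sum μ x (fun i => ee μ i w * μ i k), Finset.mul_sum]
      refine Finset.sum_congr rfl fun l _ => ?_
      rw [show ∑ i, ee μ i w * (μ i k * μ i l) = ∑ i, ee μ i w * μ i k * μ i l from
        Finset.sum_congr rfl fun i _ => by ring]
      ring
  simp only [dotProduct, inner_eq, mul_sub, Finset.sum_sub_distrib]
  congr 1
  · have : ∀ k, x k * ((Sf μ w ^ 2)⁻¹ * (∑ i, ee μ i w * μ i k) * (∑ i, ee μ i w * ∑ l, μ i l * x l))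
        = ((Sf μ w ^ 2)⁻¹ * (∑ i, ee μ i w * ∑ l, μ i l * x l)) * ((∑ i, ee μ i w * μ i k) * x k) := by
      intro k; ring
    simp only [this, ← Finset.mul_sum]
    rw [gen_sum μ x (fun i => ee μ i w)]
    ring
  · have : ∀ k, x k * ((Sf μ w)⁻¹ * ∑ i, (ee μ i w * μ i k) * ∑ l, μ i l * x l)
        = (Sf μ w)⁻¹ * ((∑ i, (ee μ i w * ∑ l, μ i l * x l) * μ i k) * x k) := by
      intro k
      rw [show ∑ i, (ee μ i w * μ i k) * ∑ l, μ i l * x l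
          = ∑ i, (ee μ i w * ∑ l, μ i l * x l) * μ i k from
        Finset.sum_congr rfl fun i _ => by ring]
      ring
    simp only [this, ← Finset.mul_sum]
    rw [gen_sum μ x (fun i => ee μ i w * ∑ l, μ i l * x l)]
    congr 1
    exact Finset.sum_congr rfl fun i _ => by ring

lemma aux_cs (e t : Fin K → ℝ) (he : ∀ i, 0 ≤ e i) :
    (∑ i, e i * t i)^2 ≤ (∑ i, e i) * ∑ i, e i * t i ^ 2 := by
  have h := Finset.sum_mul_sq_le_sq_mul_sq Finset.univ (fun i => Real.sqrt (e i))
    (fun i => Real.sqrt (e i) * t i)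
  have h1 : ∀ i : Fin K, Real.sqrt (e i) * (Real.sqrt (e i) * t i) = e i * t i := by
    intro i; rw [← mul_assoc, Real.mul_self_sqrt (he i)]
  have h2 : ∀ i : Fin K, Real.sqrt (e i) ^ 2 = e i := fun i => Real.sq_sqrt (he i)
  have h3 : ∀ i : Fin K, (Real.sqrt (e i) * t i) ^ 2 = e i * t i ^ 2 := by
    intro i; rw [mul_pow, h2]
  simp only [h1, h2, h3] at h
  exact h

lemma aux_ub (hK : 0 < K) (e t : Fin K → ℝ) (he : ∀ i, 0 < e i) :
    (∑ i, e i) * (∑ i, e i * t i^2) - (∑ i, e i * t i)^2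
      ≤ ((∑ i, e i))^2 * ∑ i, ∑ j, if i ≤ j then (t i - t j)^2 else 0 := by
  set S := ∑ i, e i with hSdef
  have hS : 0 < S :=
    Finset.sum_pos (fun i _ => he i) (by simp [Finset.univ_nonempty_iff, ← Fin.pos_iff_nonempty, hK])
  have hei : ∀ i, e i ≤ S := fun i =>
    Finset.single_le_sum (fun i _ => (he i).le) (Finset.mem_univ i)
  have identity : ∑ i, ∑ j, e i * e j * (t i - t j)^2
      = 2*(S * ∑ i, e i * t i^2) - 2*(∑ i, e i * t i)^2 := by
    have h1 : ∀ i : Fin K, ∑ j, e i * e j * (t i - t j)^2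
        = e i * t i^2 * S + e i * (∑ j, e j * t j^2) - 2*((e i * t i)*(∑ j, e j * t j)) := by
      intro i
      have hper : ∀ j : Fin K, e i * e j * (t i - t j)^2
          = e i * t i^2 * e j + e i * (e j * t j^2) - 2*((e i*t i)*(e j*t j)) := fun j => by ring
      simp only [hper, Finset.sum_sub_distrib, Finset.sum_add_distrib, ← Finset.mul_sum, ← hSdef]
    simp only [h1, Finset.sum_sub_distrib, Finset.sum_add_distrib, ← Finset.sum_mul,
      ← Finset.mul_sum]
    ring
  have hterm : ∀ i j : Fin K, e i * e j * (t i - t j)^2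
      ≤ S*S*((if i ≤ j then (t i - t j)^2 else 0) + (if j ≤ i then (t i - t j)^2 else 0)) := by
    intro i j
    have hb : e i * e j * (t i - t j)^2 ≤ S*S*(t i - t j)^2 := by
      have : e i * e j ≤ S * S :=
        mul_le_mul (hei i) (hei j) (he j).le hS.le
      exact mul_le_mul_of_nonneg_right this (sq_nonneg _)
    rcases le_total i j with h | h
    · rw [if_pos h]
      refine hb.trans ?_
      have : (0:ℝ) ≤ S*S*(if j ≤ i then (t i - t j)^2 else 0) := by positivity
      nlinarith [this]
    · rw [if_pos h]
      refine hb.trans ?_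
      have : (0:ℝ) ≤ S*S*(if i ≤ j then (t i - t j)^2 else 0) := by positivity
      nlinarith [this]
  have hsum : ∑ i, ∑ j, e i * e j * (t i - t j)^2
      ≤ ∑ i, ∑ j, S*S*((if i ≤ j then (t i - t j)^2 else 0) + (if j ≤ i then (t i - t j)^2 else 0)) :=
    Finset.sum_le_sum fun i _ => Finset.sum_le_sum fun j _ => hterm i j
  have hswap : ∑ i, ∑ j, (if j ≤ i then (t i - t j)^2 else 0)
      = ∑ i, ∑ j, (if i ≤ j then (t i - t j)^2 else 0) := by
    rw [Finset.sum_comm]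
    refine Finset.sum_congr rfl fun i _ => Finset.sum_congr rfl fun j _ => ?_
    congr 1
    rw [← neg_sub, neg_pow, Even.neg_one_pow (by norm_num)]
    ring
  have hRHS : ∑ i, ∑ j, S*S*((if i ≤ j then (t i - t j)^2 else 0) + (if j ≤ i then (t i - t j)^2 else 0))
      = 2*(S^2 * ∑ i, ∑ j, if i ≤ j then (t i - t j)^2 else 0) := by
    simp only [mul_add, Finset.sum_add_distrib, ← Finset.mul_sum]
    rw [hswap]
    ring
  rw [hRHS] at hsum
  rw [identity] at hsum
  linarith

lemma dot_sum1 {ι : Type*} (s : Finset ι) (x : Fin d → ℝ) (C : ι → Matrix (Fin d) (Fin d) ℝ) :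
    x ⬝ᵥ ((∑ i ∈ s, C i) *ᵥ x) = ∑ i ∈ s, x ⬝ᵥ (C i *ᵥ x) := by
  classical
  induction s using Finset.induction with
  | empty => simp
  | insert a s h ih => simp [Finset.sum_insert h, Matrix.add_mulVec, dotProduct_add, ih]

lemma quad_vmv (a x : Fin d → ℝ) : x ⬝ᵥ (Matrix.vecMulVec a a *ᵥ x) = (∑ k, a k * x k)^2 := by
  simp only [Matrix.mulVec, dotProduct, Matrix.vecMulVec_apply]
  rw [pow_two, Finset.sum_mul_sum]
  simp only [Finset.mul_sum]
  exact Finset.sum_congr rfl fun k _ => Finset.sum_congr rfl fun l _ => by ring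

lemma tr_vmv (a b : Fin d → ℝ) : (Matrix.vecMulVec a b).trace = ∑ k, a k * b k := by
  simp [Matrix.trace, Matrix.diag, Matrix.vecMulVec_apply]

lemma tr_mul_vmv (a b : Fin d → ℝ) :
    (Matrix.vecMulVec a a * Matrix.vecMulVec b b).trace = (∑ k, a k * b k) * (∑ k, b k * a k) := by
  simp only [Matrix.trace, Matrix.diag, Matrix.mul_apply, Matrix.vecMulVec_apply]
  rw [Finset.sum_mul_sum]
  exact Finset.sum_congr rfl fun k _ => Finset.sum_congr rfl fun l _ => by ring

lemma vmv_herm (a : Fin d → ℝ) : (Matrix.vecMulVec a a).IsHermitian := by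
  show _ᴴ = _
  ext k l
  simp [Matrix.conjTranspose_apply, Matrix.vecMulVec_apply, mul_comm]

lemma Mex_herm (μ : Fin K → E d) (w : E d) : (Mex μ w).IsHermitian := by
  show _ᴴ = _
  ext k l
  simp only [Matrix.conjTranspose_apply, Mex, Matrix.of_apply, star_trivial]
  rw [show ∑ i, ee μ i w * (μ i l * μ i k) = ∑ i, ee μ i w * (μ i k * μ i l) from
    Finset.sum_congr rfl fun i _ => by ring]
  ring

lemma norm_sq_coords (u : E d) : ∑ k, u k * u k = ‖u‖^2 := by
  rw [EuclideanSpace.norm_sq_eq]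
  exact Finset.sum_congr rfl fun k _ => by rw [Real.norm_eq_abs, sq_abs, sq]

def vvec (μ : Fin K → E d) (i j : Fin K) : Fin d → ℝ :=
  if i ≤ j then (fun k => (μ i - μ j) k) else 0

end

section Main
open scoped Matrix


/-- For the Gaussian-mixture potential
`f(w) = −log((1/K) Σᵢ exp(μᵢᵀ w − ‖μᵢ‖²/2))` with `‖μᵢ‖ ≤ R`, the Hessian `M w` of `f`
satisfies `0 ⪯ −M w ⪯ H^{1/2}` where
`H^{1/2} = Σ_{i ≤ j} (μᵢ − μⱼ)(μᵢ − μⱼ)ᵀ`, and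
`Tr((H^{1/2})²) ≤ Tr(H^{1/2})² ≤ 16 K⁴ R⁴`. -/
theorem stmt17 {d K : ℕ} (hK : 0 < K)
    (μ : Fin K → EuclideanSpace ℝ (Fin d)) (R : ℝ) (hμ : ∀ i, ‖μ i‖ ≤ R)
    (f : EuclideanSpace ℝ (Fin d) → ℝ)
    (hf : ∀ w, f w =
      -Real.log ((1 / (K : ℝ)) * ∑ i, Real.exp (inner (𝕜 := ℝ) (μ i) w - ‖μ i‖ ^ 2 / 2)))
    (g : EuclideanSpace ℝ (Fin d) → EuclideanSpace ℝ (Fin d))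
    (M : EuclideanSpace ℝ (Fin d) → Matrix (Fin d) (Fin d) ℝ)
    (hg : ∀ w, HasGradientAt f (g w) w)
    (hM : ∀ w, HasFDerivAt g (Matrix.toEuclideanCLM (𝕜 := ℝ) (M w)) w)
    (Hhalf : Matrix (Fin d) (Fin d) ℝ)
    (hHhalf : Hhalf = ∑ i, ∑ j, if i ≤ j then
        Matrix.vecMulVec (fun k => (μ i - μ j) k) (fun k => (μ i - μ j) k) else 0) :
    (∀ w, (-(M w)).PosSemidef) ∧ (∀ w, (Hhalf + M w).PosSemidef) ∧
      (Hhalf * Hhalf).trace ≤ Hhalf.trace ^ 2 ∧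
      Hhalf.trace ^ 2 ≤ 16 * (K : ℝ) ^ 4 * R ^ 4 := by
  -- identify the Hessian
  have hgG : g = Gf μ := funext fun w => (hg w).unique (hasf hK μ f hf w)
  have hMeq : ∀ w, M w = Mex μ w := by
    intro w
    have h1 : HasFDerivAt g (DG μ w) w := hgG ▸ hasG hK μ w
    have h2 : Matrix.toEuclideanCLM (𝕜 := ℝ) (M w) = Matrix.toEuclideanCLM (𝕜 := ℝ) (Mex μ w) :=
      ((hM w).unique h1).trans (toCLM_Mex μ w).symm
    exact (Matrix.toEuclideanCLM (𝕜 := ℝ) (n := Fin d)).injective h2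
  -- rewrite Hhalf
  have hH2 : Hhalf = ∑ i, ∑ j, Matrix.vecMulVec (vvec μ i j) (vvec μ i j) := by
    rw [hHhalf]
    refine Finset.sum_congr rfl fun i _ => Finset.sum_congr rfl fun j _ => ?_
    by_cases h : i ≤ j
    · simp [vvec, h]
    · simp only [vvec, if_neg h]
      ext k l
      simp [Matrix.vecMulVec_apply]
  have hHherm : Hhalf.IsHermitian := by
    rw [hH2]
    show _ᴴ = _
    rw [Matrix.conjTranspose_sum]
    refine Finset.sum_congr rfl fun i _ => ?_
    rw [Matrix.conjTranspose_sum]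
    exact Finset.sum_congr rfl fun j _ => vmv_herm _
  have hHquad : ∀ x : Fin d → ℝ, x ⬝ᵥ (Hhalf *ᵥ x)
      = ∑ i, ∑ j, if i ≤ j then ((∑ l, μ i l * x l) - (∑ l, μ j l * x l))^2 else 0 := by
    intro x
    rw [hH2, dot_sum1]
    refine Finset.sum_congr rfl fun i _ => ?_
    rw [dot_sum1]
    refine Finset.sum_congr rfl fun j _ => ?_
    rw [quad_vmv]
    by_cases h : i ≤ j
    · rw [if_pos h]
      congr 1
      simp only [vvec, if_pos h]
      rw [← Finset.sum_sub_distrib]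
      refine Finset.sum_congr rfl fun k _ => ?_
      have : (μ i - μ j) k = μ i k - μ j k := rfl
      rw [this]; ring
    · rw [if_neg h]
      simp [vvec, if_neg h]
  refine ⟨?_, ?_, ?_, ?_⟩
  · -- 0 ⪯ -M
    intro w
    rw [hMeq]
    refine Matrix.PosSemidef.of_dotProduct_mulVec_nonneg (Mex_herm μ w).neg fun x => ?_
    have hstar : star x = x := funext fun i => star_trivial _
    rw [hstar, Matrix.neg_mulVec, dotProduct_neg, quad_Mex]
    have hS := Sf_pos hK μ w
    have hcs : (∑ i, ee μ i w * (∑ l, μ i l * x l))^2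
        ≤ Sf μ w * ∑ i, ee μ i w * (∑ l, μ i l * x l)^2 := by
      simpa [Sf] using aux_cs (fun i => ee μ i w) (fun i => ∑ l, μ i l * x l)
        (fun i => (ee_pos μ i w).le)
    have h1 : (Sf μ w^2)⁻¹ * (∑ i, ee μ i w * (∑ l, μ i l * x l))^2
        ≤ (Sf μ w^2)⁻¹ * (Sf μ w * ∑ i, ee μ i w * (∑ l, μ i l * x l)^2) :=
      mul_le_mul_of_nonneg_left hcs (by positivity)
    have h2 : (Sf μ w^2)⁻¹ * (Sf μ w * ∑ i, ee μ i w * (∑ l, μ i l * x l)^2)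
        = (Sf μ w)⁻¹ * ∑ i, ee μ i w * (∑ l, μ i l * x l)^2 := by
      field_simp
    linarith
  · -- -M ⪯ Hhalf
    intro w
    rw [hMeq]
    refine Matrix.PosSemidef.of_dotProduct_mulVec_nonneg (hHherm.add (Mex_herm μ w)) fun x => ?_
    have hstar : star x = x := funext fun i => star_trivial _
    rw [hstar, Matrix.add_mulVec, dotProduct_add, quad_Mex, hHquad x]
    have hS := Sf_pos hK μ w
    have hub : Sf μ w * (∑ i, ee μ i w * (∑ l, μ i l * x l)^2)
          - (∑ i, ee μ i w * (∑ l, μ i l * x l))^2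
        ≤ (Sf μ w)^2 * ∑ i, ∑ j, if i ≤ j then ((∑ l, μ i l * x l) - (∑ l, μ j l * x l))^2 else 0 := by
      simpa [Sf] using aux_ub hK (fun i => ee μ i w) (fun i => ∑ l, μ i l * x l)
        (fun i => ee_pos μ i w)
    have e1 : (Sf μ w)⁻¹ * (∑ i, ee μ i w * (∑ l, μ i l * x l)^2)
          - ((Sf μ w)^2)⁻¹ * (∑ i, ee μ i w * (∑ l, μ i l * x l))^2
        = (Sf μ w * (∑ i, ee μ i w * (∑ l, μ i l * x l)^2)
            - (∑ i, ee μ i w * (∑ l, μ i l * x l))^2) / (Sf μ w)^2 := by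
      field_simp
    have key : (Sf μ w)⁻¹ * (∑ i, ee μ i w * (∑ l, μ i l * x l)^2)
          - ((Sf μ w)^2)⁻¹ * (∑ i, ee μ i w * (∑ l, μ i l * x l))^2
        ≤ ∑ i, ∑ j, if i ≤ j then ((∑ l, μ i l * x l) - (∑ l, μ j l * x l))^2 else 0 := by
      rw [e1, div_le_iff₀ (by positivity)]
      nlinarith [hub]
    linarith
  · -- Tr(H²) ≤ Tr(H)²
    rw [hH2]
    have expand : ((∑ i, ∑ j, Matrix.vecMulVec (vvec μ i j) (vvec μ i j))
          * (∑ p, ∑ q, Matrix.vecMulVec (vvec μ p q) (vvec μ p q))).trace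
        = ∑ i, ∑ j, ∑ p, ∑ q,
            (Matrix.vecMulVec (vvec μ i j) (vvec μ i j)
              * Matrix.vecMulVec (vvec μ p q) (vvec μ p q)).trace := by
      rw [Matrix.sum_mul, Matrix.trace_sum]
      refine Finset.sum_congr rfl fun i _ => ?_
      rw [Matrix.sum_mul, Matrix.trace_sum]
      refine Finset.sum_congr rfl fun j _ => ?_
      rw [Matrix.mul_sum, Matrix.trace_sum]
      refine Finset.sum_congr rfl fun p _ => ?_
      rw [Matrix.mul_sum, Matrix.trace_sum]
    have htrH : (∑ i, ∑ j, Matrix.vecMulVec (vvec μ i j) (vvec μ i j)).trace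
        = ∑ i, ∑ j, ∑ k, vvec μ i j k * vvec μ i j k := by
      rw [Matrix.trace_sum]
      refine Finset.sum_congr rfl fun i _ => ?_
      rw [Matrix.trace_sum]
      exact Finset.sum_congr rfl fun j _ => tr_vmv _ _
    rw [expand, htrH]
    have rhs : (∑ i, ∑ j, ∑ k, vvec μ i j k * vvec μ i j k)^2
        = ∑ i, ∑ j, ∑ p, ∑ q, (∑ k, vvec μ i j k * vvec μ i j k)
            * (∑ k, vvec μ p q k * vvec μ p q k) := by
      rw [pow_two, Finset.sum_mul_sum]
      refine Finset.sum_congr rfl fun i _ => ?_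
      calc ∑ p, (∑ j, ∑ k, vvec μ i j k * vvec μ i j k)
              * (∑ q, ∑ k, vvec μ p q k * vvec μ p q k)
          = ∑ p, ∑ j, ∑ q, (∑ k, vvec μ i j k * vvec μ i j k)
              * (∑ k, vvec μ p q k * vvec μ p q k) := by
            refine Finset.sum_congr rfl fun p _ => ?_
            rw [Finset.sum_mul_sum]
        _ = ∑ j, ∑ p, ∑ q, (∑ k, vvec μ i j k * vvec μ i j k)
              * (∑ k, vvec μ p q k * vvec μ p q k) := Finset.sum_comm
    rw [rhs]
    refine Finset.sum_le_sum fun i _ => Finset.sum_le_sum fun j _ =>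
      Finset.sum_le_sum fun p _ => Finset.sum_le_sum fun q _ => ?_
    rw [tr_mul_vmv]
    have hsw : (∑ k, vvec μ p q k * vvec μ i j k) = ∑ k, vvec μ i j k * vvec μ p q k :=
      Finset.sum_congr rfl fun k _ => by ring
    rw [hsw, ← pow_two]
    have := Finset.sum_mul_sq_le_sq_mul_sq Finset.univ (vvec μ i j) (vvec μ p q)
    calc (∑ k, vvec μ i j k * vvec μ p q k)^2
        ≤ (∑ k, vvec μ i j k ^ 2) * (∑ k, vvec μ p q k ^ 2) := this
      _ = (∑ k, vvec μ i j k * vvec μ i j k) * (∑ k, vvec μ p q k * vvec μ p q k) := by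
          congr 1 <;> exact Finset.sum_congr rfl fun k _ => by ring
  · -- Tr(H)² ≤ 16 K⁴ R⁴
    have hR0 : 0 ≤ R := le_trans (norm_nonneg (μ ⟨0, hK⟩)) (hμ _)
    have htrH : Hhalf.trace = ∑ i, ∑ j, ∑ k, vvec μ i j k * vvec μ i j k := by
      rw [hH2, Matrix.trace_sum]
      refine Finset.sum_congr rfl fun i _ => ?_
      rw [Matrix.trace_sum]
      exact Finset.sum_congr rfl fun j _ => tr_vmv _ _
    have htr_nonneg : 0 ≤ Hhalf.trace := by
      rw [htrH]
      refine Finset.sum_nonneg fun i _ => Finset.sum_nonneg fun j _ =>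
        Finset.sum_nonneg fun k _ => mul_self_nonneg _
    have hterm_le : ∀ i j, ∑ k, vvec μ i j k * vvec μ i j k ≤ 4*R^2 := by
      intro i j
      by_cases h : i ≤ j
      · simp only [vvec, if_pos h]
        have hc : ∑ k, (μ i - μ j) k * (μ i - μ j) k = ‖μ i - μ j‖^2 := norm_sq_coords _
        rw [hc]
        have hn : ‖μ i - μ j‖ ≤ 2*R := le_trans (norm_sub_le _ _) (by linarith [hμ i, hμ j])
        nlinarith [norm_nonneg (μ i - μ j)]
      · simp only [vvec, if_neg h, Pi.zero_apply, mul_zero, Finset.sum_const_zero]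
        positivity
    have htr_le : Hhalf.trace ≤ (K:ℝ)^2 * (4*R^2) := by
      rw [htrH]
      calc ∑ i, ∑ j, ∑ k, vvec μ i j k * vvec μ i j k
          ≤ ∑ _i : Fin K, ∑ _j : Fin K, 4*R^2 :=
            Finset.sum_le_sum fun i _ => Finset.sum_le_sum fun j _ => hterm_le i j
        _ = (K:ℝ)^2*(4*R^2) := by
            simp [Finset.sum_const, Finset.card_univ]
            ring
    calc Hhalf.trace^2 ≤ ((K:ℝ)^2*(4*R^2))^2 := pow_le_pow_left₀ htr_nonneg htr_le 2
      _ = 16*(K:ℝ)^4*R^4 := by ring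

end Main
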